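/- arXiv:1308.2648 — 3 statements merged into one kernel-verified Lean document; each statement's English description precedes it below -/
import Mathlib

section
/- Let H be a real Hilbert space and 1 ≤ p ≤ 2. There exists a constant N, depending only on p, such that for all x, y ∈ H one has ‖x+y‖^p − ‖x‖^p − p·‖x‖^(p−2)·⟨x, y⟩ ≤ N·‖y‖^p, where the term ‖x‖^(p−2)·⟨x, y⟩ is interpreted as 0 when x = 0. -/
open RealInnerProductSpace

universe u

/-- Let `1 ≤ p ≤ 2`. There is a constant `N`, depending only on `p`, such that for every real
Hilbert space `H` and all `x, y ∈ H` one has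
`‖x+y‖^p − ‖x‖^p − p·‖x‖^(p−2)·⟪x, y⟫ ≤ N·‖y‖^p`. (When `x = 0` the inner-product term
vanishes, since `⟪0, y⟫ = 0`, in accordance with the convention that it is `0` there.) -/
theorem rpow_norm_taylor_upper (p : ℝ) (hp1 : 1 ≤ p) (hp2 : p ≤ 2) :
    ∃ N : ℝ, ∀ (H : Type u) [NormedAddCommGroup H] [InnerProductSpace ℝ H]
      [CompleteSpace H], ∀ x y : H,
      ‖x + y‖ ^ p - ‖x‖ ^ p - p * ‖x‖ ^ (p - 2) * ⟪x, y⟫ ≤ N * ‖y‖ ^ p := by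
  have hp0 : (0:ℝ) < p := lt_of_lt_of_le one_pos hp1
  refine ⟨2 ^ p + p + p, fun H _ _ _ x y => ?_⟩
  have h2p : (1:ℝ) ≤ 2 ^ p := by
    have := Real.rpow_le_rpow_of_exponent_le (x := 2) one_le_two hp0.le
    simpa using this
  by_cases hy0 : y = 0
  · simp [hy0, Real.zero_rpow hp0.ne']
  have hy : 0 < ‖y‖ := norm_pos_iff.2 hy0
  have hyp : 0 < ‖y‖ ^ p := Real.rpow_pos_of_pos hy p
  by_cases hx0 : x = 0
  · simp only [hx0, zero_add, inner_zero_left, mul_zero, sub_zero]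
    rw [norm_zero, Real.zero_rpow hp0.ne', sub_zero]
    nlinarith [mul_nonneg (show (0:ℝ) ≤ 2^p + p + p - 1 by linarith) hyp.le]
  have hx : 0 < ‖x‖ := norm_pos_iff.2 hx0
  have hinner : |⟪x, y⟫| ≤ ‖x‖ * ‖y‖ := abs_real_inner_le_norm x y
  have hxp2 : (0:ℝ) ≤ ‖x‖ ^ (p-2) := (Real.rpow_pos_of_pos hx _).le
  rcases le_total ‖x‖ ‖y‖ with hxy | hxy
  · -- case ‖x‖ ≤ ‖y‖
    have h1 : ‖x + y‖ ^ p ≤ 2 ^ p * ‖y‖ ^ p := by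
      rw [← Real.mul_rpow (by norm_num) (norm_nonneg _)]
      apply Real.rpow_le_rpow (norm_nonneg _) _ hp0.le
      calc ‖x + y‖ ≤ ‖x‖ + ‖y‖ := norm_add_le _ _
        _ ≤ 2 * ‖y‖ := by linarith
    have h2 : -(p * ‖x‖ ^ (p-2) * ⟪x, y⟫) ≤ p * ‖y‖ ^ p := by
      have e1 : ‖x‖ ^ (p-2) * (‖x‖ * ‖y‖) = ‖x‖ ^ (p-1) * ‖y‖ := by
        rw [show p - 1 = (p - 2) + 1 by ring, Real.rpow_add_one hx.ne']
        ring
      have e2 : ‖x‖ ^ (p-1) ≤ ‖y‖ ^ (p-1) :=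
        Real.rpow_le_rpow hx.le hxy (by linarith)
      have e3 : ‖y‖ ^ (p-1) * ‖y‖ = ‖y‖ ^ p := by
        rw [show p = (p-1) + 1 by ring, Real.rpow_add_one hy.ne']
        ring_nf
      calc -(p * ‖x‖ ^ (p-2) * ⟪x, y⟫) = p * (‖x‖ ^ (p-2) * -⟪x, y⟫) := by ring
        _ ≤ p * (‖x‖ ^ (p-2) * (‖x‖ * ‖y‖)) := by
            apply mul_le_mul_of_nonneg_left _ hp0.le
            exact mul_le_mul_of_nonneg_left ((neg_le_abs _).trans hinner) hxp2
        _ = ‖x‖ ^ (p-1) * ‖y‖ * p := by rw [e1]; ring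
        _ ≤ ‖y‖ ^ (p-1) * ‖y‖ * p :=
            mul_le_mul_of_nonneg_right (mul_le_mul_of_nonneg_right e2 hy.le) hp0.le
        _ = p * ‖y‖ ^ p := by rw [e3]; ring
    have hxp : (0:ℝ) ≤ ‖x‖ ^ p := (Real.rpow_pos_of_pos hx p).le
    have hexp : (2^p + p + p) * ‖y‖ ^ p
        = 2^p * ‖y‖ ^ p + p * ‖y‖ ^ p + p * ‖y‖ ^ p := by ring
    have hppos : (0:ℝ) ≤ p * ‖y‖ ^ p := mul_nonneg hp0.le hyp.le
    linarith
  · -- case ‖y‖ ≤ ‖x‖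
    set s : ℝ := (‖x + y‖ ^ 2 - ‖x‖ ^ 2) / ‖x‖ ^ 2 with hs
    have hx2 : (0:ℝ) < ‖x‖ ^ 2 := by positivity
    have hs1 : (-1:ℝ) ≤ s := by
      rw [hs, le_div_iff₀ hx2]
      nlinarith [sq_nonneg ‖x + y‖]
    have hbern := rpow_one_add_le_one_add_mul_self hs1 (p := p/2)
      (by linarith) (by linarith)
    have h1s : 1 + s = ‖x + y‖ ^ 2 / ‖x‖ ^ 2 := by rw [hs, one_add_div hx2.ne']; ring
    have hL : (1 + s) ^ (p/2) = ‖x + y‖ ^ p / ‖x‖ ^ p := by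
      rw [h1s, Real.div_rpow (by positivity) (by positivity),
        ← Real.rpow_natCast ‖x + y‖ 2, ← Real.rpow_natCast ‖x‖ 2,
        ← Real.rpow_mul (norm_nonneg _), ← Real.rpow_mul (norm_nonneg _)]
      push_cast
      rw [show (2:ℝ) * (p/2) = p by ring]
    have hxp : (0:ℝ) < ‖x‖ ^ p := Real.rpow_pos_of_pos hx p
    have key : ‖x + y‖ ^ p ≤ ‖x‖ ^ p + (p/2) * (‖x‖ ^ p * s) := by
      have h := mul_le_mul_of_nonneg_right hbern hxp.le
      rw [hL, div_mul_cancel₀ _ hxp.ne'] at h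
      calc ‖x + y‖ ^ p ≤ (1 + p/2 * s) * ‖x‖ ^ p := h
        _ = ‖x‖ ^ p + (p/2) * (‖x‖ ^ p * s) := by ring
    have hxs : ‖x‖ ^ p * s = ‖x‖ ^ (p-2) * (2 * ⟪x, y⟫ + ‖y‖ ^ 2) := by
      have e : ‖x‖ ^ (p-2) = ‖x‖ ^ p / ‖x‖ ^ 2 := by
        rw [← Real.rpow_natCast ‖x‖ 2, ← Real.rpow_sub hx]
        norm_num
      rw [hs, e, norm_add_sq_real]
      ring
    have step1 : ‖x + y‖ ^ p - ‖x‖ ^ p - p * ‖x‖ ^ (p-2) * ⟪x, y⟫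
        ≤ p/2 * (‖x‖ ^ (p-2) * ‖y‖ ^ 2) := by
      rw [hxs] at key
      nlinarith [key]
    have hK : ‖x‖ ^ (p-2) ≤ ‖y‖ ^ (p-2) :=
      Real.rpow_le_rpow_of_nonpos hy hxy (by linarith)
    have hyid : ‖y‖ ^ (p-2) * ‖y‖ ^ 2 = ‖y‖ ^ p := by
      rw [← Real.rpow_natCast ‖y‖ 2, ← Real.rpow_add hy]
      norm_num
    calc ‖x + y‖ ^ p - ‖x‖ ^ p - p * ‖x‖ ^ (p-2) * ⟪x, y⟫
        ≤ p/2 * (‖x‖ ^ (p-2) * ‖y‖ ^ 2) := step1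
      _ ≤ p/2 * (‖y‖ ^ (p-2) * ‖y‖ ^ 2) := by
          apply mul_le_mul_of_nonneg_left
            (mul_le_mul_of_nonneg_right hK (by positivity)) (by linarith)
      _ = p/2 * ‖y‖ ^ p := by rw [hyid]
      _ ≤ (2^p + p + p) * ‖y‖ ^ p :=
          mul_le_mul_of_nonneg_right (by linarith) hyp.le
end

section
/- Let H be a real Hilbert space and p > 2. There exists a constant N, depending only on p, such that for all x, y ∈ H one has ‖x+y‖^p − ‖x‖^p − p·‖x‖^(p−2)·⟨x, y⟩ ≤ N·(‖x‖^(p−2)·‖y‖² + ‖y‖^p), where the term ‖x‖^(p−2)·⟨x, y⟩ is interpreted as 0 when x = 0. -/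
open RealInnerProductSpace

universe u

private lemma mvt_rpow (r : ℝ) {u v : ℝ} (hu : 0 < u) (hv : 0 < v) :
    ∃ w, min u v ≤ w ∧ w ≤ max u v ∧ v ^ r - u ^ r = r * w ^ (r - 1) * (v - u) := by
  have key : ∀ a b : ℝ, 0 < a → a < b →
      ∃ w, a ≤ w ∧ w ≤ b ∧ b ^ r - a ^ r = r * w ^ (r - 1) * (b - a) := by
    intro a b ha hab
    have hcont : ContinuousOn (fun x : ℝ => x ^ r) (Set.Icc a b) := fun x hx =>
      (Real.continuousAt_rpow_const x r (Or.inl (lt_of_lt_of_le ha hx.1).ne')).continuousWithinAt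
    have hderiv : ∀ x ∈ Set.Ioo a b, HasDerivAt (fun x : ℝ => x ^ r) (r * x ^ (r - 1)) x :=
      fun x hx => Real.hasDerivAt_rpow_const (Or.inl (ha.trans hx.1).ne')
    obtain ⟨c, hc, hc'⟩ := exists_hasDerivAt_eq_slope (fun x : ℝ => x ^ r)
      (fun x => r * x ^ (r - 1)) hab hcont hderiv
    refine ⟨c, hc.1.le, hc.2.le, ?_⟩
    rw [hc', div_mul_cancel₀ _ (sub_ne_zero.2 hab.ne')]
  rcases lt_trichotomy u v with h | h | h
  · obtain ⟨w, h1, h2, h3⟩ := key u v hu h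
    exact ⟨w, by rw [min_eq_left h.le]; exact h1, by rw [max_eq_right h.le]; exact h2, h3⟩
  · exact ⟨u, min_le_left _ _, le_max_left _ _, by simp [h]⟩
  · obtain ⟨w, h1, h2, h3⟩ := key v u hv h
    exact ⟨w, by rw [min_eq_right h.le]; exact h1, by rw [max_eq_left h.le]; exact h2,
      by linear_combination -h3⟩

private lemma second_order (q : ℝ) (hq : 1 < q) :
    ∃ C : ℝ, 0 ≤ C ∧ ∀ h : ℝ, -(3/4) ≤ h → h ≤ 2 →
      (1 + h) ^ q - 1 - q * h ≤ C * h ^ 2 := by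
  have hq0 : (0:ℝ) < q := by linarith
  set B : ℝ := (4:ℝ)⁻¹ ^ (q - 2) + (3:ℝ) ^ (q - 2) with hBdef
  have hB0 : 0 ≤ B := by rw [hBdef]; positivity
  refine ⟨q * (q - 1) * B,
    mul_nonneg (mul_nonneg hq0.le (by linarith)) hB0, ?_⟩
  intro h h1 h2
  have hpos : (0:ℝ) < 1 + h := by linarith
  obtain ⟨w, hw1, hw2, hw3⟩ := mvt_rpow q one_pos hpos
  have hw14 : (4:ℝ)⁻¹ ≤ w := le_trans (le_min (by norm_num) (by linarith)) hw1
  have hw3' : w ≤ 3 := hw2.trans (max_le (by norm_num) (by linarith))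
  have hwpos : (0:ℝ) < w := by linarith
  obtain ⟨z, hz1, hz2, hz3⟩ := mvt_rpow (q - 1) one_pos hwpos
  have hz14 : (4:ℝ)⁻¹ ≤ z := le_trans (le_min (by norm_num) hw14) hz1
  have hz3' : z ≤ 3 := hz2.trans (max_le (by norm_num) hw3')
  have hzpos : (0:ℝ) < z := by linarith
  have hzB : z ^ (q - 1 - 1) ≤ B := by
    have he : q - 1 - 1 = q - 2 := by ring
    rw [he, hBdef]
    rcases le_or_gt 2 q with hq2 | hq2
    · have h3 : z ^ (q - 2) ≤ (3:ℝ) ^ (q - 2) :=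
        Real.rpow_le_rpow (by linarith) hz3' (by linarith)
      have h4 : (0:ℝ) ≤ (4:ℝ)⁻¹ ^ (q - 2) := by positivity
      linarith
    · have h3 : z ^ (q - 2) ≤ ((4:ℝ)⁻¹) ^ (q - 2) :=
        Real.rpow_le_rpow_of_nonpos (by norm_num) hz14 (by linarith)
      have h4 : (0:ℝ) ≤ (3:ℝ) ^ (q - 2) := by positivity
      linarith
  rw [Real.one_rpow] at hw3 hz3
  have hwh : (w - 1) * h ≤ h ^ 2 := by
    rcases le_total 0 h with hh | hh
    · have hww : w ≤ 1 + h := by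
        rw [max_eq_right (by linarith : (1:ℝ) ≤ 1 + h)] at hw2; exact hw2
      nlinarith
    · have hww : 1 + h ≤ w := by
        rw [min_eq_right (by linarith : 1 + h ≤ (1:ℝ))] at hw1; exact hw1
      nlinarith
  have hz0 : (0:ℝ) ≤ z ^ (q - 1 - 1) := Real.rpow_nonneg hzpos.le _
  have key : (1 + h) ^ q - 1 - q * h = q * (q - 1) * (z ^ (q - 1 - 1) * ((w - 1) * h)) := by
    linear_combination hw3 + q * h * hz3
  calc (1 + h) ^ q - 1 - q * h = q * (q - 1) * (z ^ (q - 1 - 1) * ((w - 1) * h)) := key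
    _ ≤ q * (q - 1) * (B * h ^ 2) := by
        apply mul_le_mul_of_nonneg_left _ (by nlinarith : (0:ℝ) ≤ q * (q - 1))
        calc z ^ (q - 1 - 1) * ((w - 1) * h) ≤ z ^ (q - 1 - 1) * h ^ 2 :=
              mul_le_mul_of_nonneg_left hwh hz0
          _ ≤ B * h ^ 2 := mul_le_mul_of_nonneg_right hzB (sq_nonneg h)
    _ = q * (q - 1) * B * h ^ 2 := by ring

private lemma sq_bound {a b t : ℝ} (hb : 0 ≤ b) (hab : 2 * b < a)
    (htl : -(a * b) ≤ t) (htr : t ≤ a * b) : (2 * t + b ^ 2) ^ 2 ≤ 7 * b ^ 2 * a ^ 2 := by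
  have hbb : b * b ≤ a / 2 * b := mul_le_mul_of_nonneg_right (by linarith) hb
  have f1 : 0 ≤ 5 / 2 * (a * b) - (2 * t + b ^ 2) := by nlinarith
  have f2 : 0 ≤ 5 / 2 * (a * b) + (2 * t + b ^ 2) := by nlinarith
  nlinarith [mul_nonneg f1 f2]

private lemma scalar_main (q : ℝ) (hq : 1 < q) :
    ∃ N : ℝ, ∀ a b t : ℝ, 0 ≤ a → 0 ≤ b → |t| ≤ a * b →
      (a ^ 2 + 2 * t + b ^ 2) ^ q - (a ^ 2) ^ q - q * (a ^ 2) ^ (q - 1) * (2 * t) ≤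
        N * ((a ^ 2) ^ (q - 1) * b ^ 2 + (b ^ 2) ^ q) := by
  obtain ⟨C, hC0, hC⟩ := second_order q hq
  have hq0 : (0:ℝ) < q := by linarith
  refine ⟨(9:ℝ) ^ q + 4 * q + 7 * C + q, ?_⟩
  intro a b t ha hb ht
  obtain ⟨htl, htr⟩ := abs_le.mp ht
  have h9q : (0:ℝ) < (9:ℝ) ^ q := Real.rpow_pos_of_pos (by norm_num) q
  have hb2 : (0:ℝ) ≤ b ^ 2 := sq_nonneg b
  have hA2 : (0:ℝ) ≤ a ^ 2 := sq_nonneg a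
  have hAq1 : (0:ℝ) ≤ (a ^ 2) ^ (q - 1) := Real.rpow_nonneg hA2 _
  have hbq : (0:ℝ) ≤ (b ^ 2) ^ q := Real.rpow_nonneg hb2 _
  have hAb : (0:ℝ) ≤ (a ^ 2) ^ (q - 1) * b ^ 2 := mul_nonneg hAq1 hb2
  rcases le_or_gt a (2 * b) with hab | hab
  · -- a ≤ 2b : everything is controlled by b powers
    have hs0 : (0:ℝ) ≤ a ^ 2 + 2 * t + b ^ 2 := by nlinarith [sq_nonneg (a - b)]
    have h1 : a ^ 2 + 2 * t + b ^ 2 ≤ 9 * b ^ 2 := by nlinarith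
    have e1 : (a ^ 2 + 2 * t + b ^ 2) ^ q ≤ (9:ℝ) ^ q * (b ^ 2) ^ q := by
      rw [← Real.mul_rpow (by norm_num) hb2]
      exact Real.rpow_le_rpow hs0 h1 hq0.le
    have e2 : (0:ℝ) ≤ (a ^ 2) ^ q := Real.rpow_nonneg hA2 _
    have e3 : -(q * (a ^ 2) ^ (q - 1) * (2 * t)) ≤ 4 * q * ((a ^ 2) ^ (q - 1) * b ^ 2) := by
      have hab2 : a * b ≤ 2 * b ^ 2 := by nlinarith
      have : -t ≤ 2 * b ^ 2 := by linarith
      nlinarith [mul_le_mul_of_nonneg_left this (mul_nonneg (by positivity : (0:ℝ) ≤ 2 * q) hAq1)]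
    nlinarith [mul_nonneg (by positivity : (0:ℝ) ≤ 4 * q + 7 * C + q) hbq,
      mul_nonneg (by positivity : (0:ℝ) ≤ (9:ℝ) ^ q + 7 * C + q) hAb]
  · -- 2b < a : Taylor expansion regime
    have ha0 : (0:ℝ) < a := by linarith
    have hA : (0:ℝ) < a ^ 2 := by positivity
    set h : ℝ := (2 * t + b ^ 2) / a ^ 2 with hhdef
    have hh1 : -(3/4) ≤ h := by
      rw [hhdef, le_div_iff₀ hA]
      nlinarith [mul_nonneg (by linarith : (0:ℝ) ≤ a / 2 - b) (by linarith : (0:ℝ) ≤ 3 * a / 2 - b)]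
    have hh2 : h ≤ 2 := by
      rw [hhdef, div_le_iff₀ hA]
      nlinarith
    have hC' := hC h hh1 hh2
    have hAq0 : (0:ℝ) ≤ (a ^ 2) ^ q := Real.rpow_nonneg hA2 _
    have hmul := mul_le_mul_of_nonneg_left hC' hAq0
    have hAq : (a ^ 2) ^ q = (a ^ 2) ^ (q - 1) * a ^ 2 := by
      rw [show q = (q - 1) + 1 by ring, Real.rpow_add hA, Real.rpow_one]
      ring_nf
    have e1 : (a ^ 2) ^ q * (1 + h) ^ q = (a ^ 2 + 2 * t + b ^ 2) ^ q := by
      rw [← Real.mul_rpow hA2 (by linarith : (0:ℝ) ≤ 1 + h)]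
      congr 1
      rw [hhdef]
      field_simp
      ring
    have e2 : (a ^ 2) ^ q * h = (a ^ 2) ^ (q - 1) * (2 * t + b ^ 2) := by
      rw [hAq, hhdef]
      field_simp
    have e3 : (a ^ 2) ^ q * h ^ 2 ≤ (a ^ 2) ^ (q - 1) * (7 * b ^ 2) := by
      have heq : (a ^ 2) ^ q * h ^ 2 = (a ^ 2) ^ (q - 1) * ((2 * t + b ^ 2) ^ 2 / a ^ 2) := by
        rw [hAq, hhdef]
        field_simp
      rw [heq]
      apply mul_le_mul_of_nonneg_left _ hAq1
      rw [div_le_iff₀ hA]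
      exact sq_bound hb hab htl htr
    -- combine
    have e3' : C * ((a ^ 2) ^ q * h ^ 2) ≤ C * ((a ^ 2) ^ (q - 1) * (7 * b ^ 2)) :=
      mul_le_mul_of_nonneg_left e3 hC0
    have expand : (a ^ 2) ^ q * ((1 + h) ^ q - 1 - q * h) =
        (a ^ 2 + 2 * t + b ^ 2) ^ q - (a ^ 2) ^ q - q * ((a ^ 2) ^ (q - 1) * (2 * t))
          - q * ((a ^ 2) ^ (q - 1) * b ^ 2) := by
      linear_combination e1 - q * e2
    have hrw : (a ^ 2) ^ q * (C * h ^ 2) = C * ((a ^ 2) ^ q * h ^ 2) := by ring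
    have main : (a ^ 2 + 2 * t + b ^ 2) ^ q - (a ^ 2) ^ q - q * (a ^ 2) ^ (q - 1) * (2 * t) ≤
        (7 * C + q) * ((a ^ 2) ^ (q - 1) * b ^ 2) := by
      rw [expand, hrw] at hmul
      linarith [e3']
    have f1 : (7 * C + q) * ((a ^ 2) ^ (q - 1) * b ^ 2) ≤
        ((9:ℝ) ^ q + 4 * q + 7 * C + q) * ((a ^ 2) ^ (q - 1) * b ^ 2) :=
      mul_le_mul_of_nonneg_right (by linarith) hAb
    have f2 : 0 ≤ ((9:ℝ) ^ q + 4 * q + 7 * C + q) * (b ^ 2) ^ q :=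
      mul_nonneg (by linarith) hbq
    linarith [main, f1, f2]

/-- Let `p > 2`. There is a constant `N`, depending only on `p`, such that for every real
Hilbert space `H` and all `x, y ∈ H`,
`‖x+y‖^p − ‖x‖^p − p·‖x‖^(p−2)·⟪x, y⟫ ≤ N·(‖x‖^(p−2)·‖y‖² + ‖y‖^p)`.
(When `x = 0` the inner-product term vanishes, since `⟪0, y⟫ = 0` and `0^(p−2) = 0`,
in accordance with the convention that it is interpreted as `0` there.) -/
theorem rpow_norm_taylor_two_upper_split (p : ℝ) (hp : 2 < p) :
    ∃ N : ℝ, ∀ (H : Type u) [NormedAddCommGroup H] [InnerProductSpace ℝ H]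
      [CompleteSpace H], ∀ x y : H,
      ‖x + y‖ ^ p - ‖x‖ ^ p - p * ‖x‖ ^ (p - 2) * ⟪x, y⟫ ≤
        N * (‖x‖ ^ (p - 2) * ‖y‖ ^ 2 + ‖y‖ ^ p) := by
  have hq : 1 < p / 2 := by linarith
  obtain ⟨N, hN⟩ := scalar_main (p / 2) hq
  refine ⟨N, ?_⟩
  intro H _ _ _ x y
  have pow_half : ∀ c : ℝ, 0 ≤ c → ((c ^ 2 : ℝ)) ^ (p / 2) = c ^ p := by
    intro c hc
    rw [← Real.rpow_natCast c 2, ← Real.rpow_mul hc]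
    congr 1
    push_cast
    ring
  have pow_half' : ∀ c : ℝ, 0 ≤ c → ((c ^ 2 : ℝ)) ^ (p / 2 - 1) = c ^ (p - 2) := by
    intro c hc
    rw [← Real.rpow_natCast c 2, ← Real.rpow_mul hc]
    congr 1
    push_cast
    ring
  have hinner : |⟪x, y⟫| ≤ ‖x‖ * ‖y‖ := abs_real_inner_le_norm x y
  have h := hN ‖x‖ ‖y‖ ⟪x, y⟫ (norm_nonneg x) (norm_nonneg y) hinner
  have hsq : ‖x‖ ^ 2 + 2 * ⟪x, y⟫ + ‖y‖ ^ 2 = ‖x + y‖ ^ 2 := (norm_add_sq_real x y).symm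
  rw [hsq, pow_half _ (norm_nonneg _), pow_half _ (norm_nonneg _),
    pow_half _ (norm_nonneg _), pow_half' _ (norm_nonneg _)] at h
  linarith [h]
end

section
/- (Rosenthal's inequality.) Let p ≥ 2 be a real number. There exists a constant N, depending only on p, such that for every probability space (Ω, ℱ, P) and every finite sequence ξ_1, …, ξ_n of independent real random variables with E|ξ_k|^p < ∞ and E ξ_k = 0 for each k, one has E|ξ_1 + ⋯ + ξ_n|^p ≤ N · max( Σ_{k=1}^n E|ξ_k|^p , ( Σ_{k=1}^n E ξ_k² )^{p/2} ). -/
open MeasureTheory ProbabilityTheory Real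
open scoped ENNReal NNReal

universe u

lemma sq_rpow_eq (t : ℝ) (r : ℝ) : ((t^2 : ℝ)) ^ r = |t| ^ (2*r) := by
  rw [← sq_abs, ← Real.rpow_natCast (|t|) 2, ← Real.rpow_mul (abs_nonneg t)]
  norm_num

lemma hasDerivAt_f {p : ℝ} (hp : 2 ≤ p) (t : ℝ) :
    HasDerivAt (fun t : ℝ => ((t^2:ℝ)) ^ (p/2)) (p * t * ((t^2:ℝ)) ^ ((p-2)/2)) t := by
  have h1 : HasDerivAt (fun t : ℝ => (t^2:ℝ)) (2 * t) t := by
    simpa using hasDerivAt_pow 2 t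
  have h2 := h1.rpow_const (p := p/2) (Or.inr (by linarith))
  convert h2 using 1
  rw [show (p/2 - 1 : ℝ) = (p-2)/2 by ring]
  ring

lemma hasDerivAt_F {p : ℝ} (hp : 2 ≤ p) {s : ℝ} (hs : s ≠ 0) :
    HasDerivAt (fun t : ℝ => p * t * ((t^2:ℝ)) ^ ((p-2)/2))
      (p * (p-1) * ((s^2:ℝ)) ^ ((p-2)/2)) s := by
  have hs2 : (0:ℝ) < s^2 := by positivity
  have h1 : HasDerivAt (fun t : ℝ => (t^2:ℝ)) (2 * s) s := by
    simpa using hasDerivAt_pow 2 s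
  have h2 := h1.rpow_const (p := (p-2)/2) (Or.inl (by positivity))
  have h3 := ((hasDerivAt_id s).mul h2).const_mul p
  have h3' : HasDerivAt (fun t : ℝ => p * t * ((t^2:ℝ)) ^ ((p-2)/2))
      (p * (((s^2:ℝ))^((p-2)/2) + s * (2 * s * ((p-2)/2) * ((s^2:ℝ))^((p-2)/2 - 1)))) s := by
    have he : (fun t : ℝ => p * t * ((t^2:ℝ)) ^ ((p-2)/2))
        = fun u : ℝ => p * (u * ((u^2:ℝ)) ^ ((p-2)/2)) := by funext u; ring
    rw [he]; simpa [id] using h3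
  convert h3' using 1
  have key : (s^2:ℝ) * (s^2:ℝ)^((p-2)/2 - 1) = (s^2:ℝ)^((p-2)/2) := by
    nth_rewrite 1 [← Real.rpow_one (s^2:ℝ)]
    rw [← Real.rpow_add hs2]
    congr 1
    ring
  have expand : p * (((s^2:ℝ))^((p-2)/2) + s * (2 * s * ((p-2)/2) * ((s^2:ℝ))^((p-2)/2 - 1)))
      = p * ((s^2:ℝ))^((p-2)/2) + p * (p-2) * ((s^2:ℝ) * ((s^2:ℝ))^((p-2)/2 - 1)) := by
    ring
  rw [expand, key]
  ring

lemma pointwise_key {p : ℝ} (hp : 2 ≤ p) (x y : ℝ) :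
    |x + y| ^ p ≤ |x| ^ p + (p * (x * |x| ^ (p-2))) * y
      + (3^p + p * 2^(p-1) + p * (p-1) * (3/2:ℝ)^(p-2)) * (|x|^(p-2) * y^2 + |y|^p) := by
  have hp0 : (0:ℝ) < p := by linarith
  have habs : ∀ t : ℝ, |t| * |t|^(p-2) = |t|^(p-1) := by
    intro t
    rw [show (p-1 : ℝ) = 1 + (p-2) by ring, Real.rpow_add' (abs_nonneg t) (by norm_num; linarith),
      Real.rpow_one]
  have h1' : (0:ℝ) ≤ (3:ℝ)^p := Real.rpow_nonneg (by norm_num) _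
  have h2' : (0:ℝ) ≤ (2:ℝ)^(p-1) := Real.rpow_nonneg (by norm_num) _
  have h3' : (0:ℝ) ≤ (3/2:ℝ)^(p-2) := Real.rpow_nonneg (by norm_num) _
  have hpp1 : (0:ℝ) ≤ p * (p-1) := by nlinarith
  have hCpos : (0:ℝ) ≤ 3^p + p * 2^(p-1) + p * (p-1) * (3/2:ℝ)^(p-2) := by
    have := mul_nonneg hpp1 h3'
    have := mul_nonneg hp0.le h2'
    linarith
  rcases le_or_gt (|x|) (2 * |y|) with hc | hc
  · -- easy case
    have hA : |x + y| ^ p ≤ 3^p * |y|^p := by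
      rw [← Real.mul_rpow (by norm_num) (abs_nonneg y)]
      exact Real.rpow_le_rpow (abs_nonneg _) ((abs_add_le x y).trans (by linarith)) hp0.le
    have hB : |p * (x * |x|^(p-2)) * y| ≤ p * 2^(p-1) * |y|^p := by
      have e1 : |p * (x * |x|^(p-2)) * y| = p * (|x| * |x|^(p-2)) * |y| := by
        rw [abs_mul, abs_mul, abs_mul, abs_of_nonneg hp0.le,
          abs_of_nonneg (Real.rpow_nonneg (abs_nonneg x) _)]
      rw [e1, habs x]
      have e2 : |x|^(p-1) ≤ 2^(p-1) * |y|^(p-1) := by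
        rw [← Real.mul_rpow (by norm_num) (abs_nonneg y)]
        exact Real.rpow_le_rpow (abs_nonneg x) hc (by linarith)
      have e3 : |y|^(p-1) * |y| = |y|^p := by
        conv_rhs => rw [show (p:ℝ) = (p-1) + 1 by ring]
        rw [Real.rpow_add' (abs_nonneg y) (by norm_num; linarith), Real.rpow_one]
      calc p * (|x|^(p-1)) * |y| ≤ p * (2^(p-1) * |y|^(p-1)) * |y| := by
            apply mul_le_mul_of_nonneg_right _ (abs_nonneg y)
            exact mul_le_mul_of_nonneg_left e2 hp0.le
        _ = p * 2^(p-1) * (|y|^(p-1) * |y|) := by ring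
        _ = p * 2^(p-1) * |y|^p := by rw [e3]
    have hB' : -(p * 2^(p-1) * |y|^p) ≤ p * (x * |x|^(p-2)) * y := neg_le_of_abs_le hB
    have hC : (0:ℝ) ≤ |x|^(p-2) * y^2 := by positivity
    have hD : (0:ℝ) ≤ |x|^p := Real.rpow_nonneg (abs_nonneg x) _
    have hyp : (0:ℝ) ≤ |y|^p := Real.rpow_nonneg (abs_nonneg y) _
    nlinarith [mul_nonneg hpp1 h3', mul_nonneg (mul_nonneg hpp1 h3') hyp,
      mul_nonneg (mul_nonneg hpp1 h3') hC, mul_nonneg h1' hC, mul_nonneg (mul_nonneg hp0.le h2') hC]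
  · -- Taylor case
    have hx0 : (0:ℝ) < |x| := by
      have := abs_nonneg y; linarith
    have hxne : x ≠ 0 := by
      intro h; rw [h] at hx0; simp at hx0
    set r := |y| with hr
    have hr0 : (0:ℝ) ≤ r := abs_nonneg y
    set f : ℝ → ℝ := fun t => ((t^2:ℝ)) ^ (p/2) with hf
    set F : ℝ → ℝ := fun t => p * t * ((t^2:ℝ)) ^ ((p-2)/2) with hFdef
    set K := p * (p-1) * ((3/2) * |x|)^(p-2) with hK
    have hK0 : 0 ≤ K := mul_nonneg hpp1 (Real.rpow_nonneg (by positivity) _)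
    have hFbound : ∀ t ∈ Set.Icc (-r) r, ‖F (x+t) - F x‖ ≤ K * r := by
      intro t ht
      obtain ⟨ht1, ht2⟩ := ht
      have habst : |t| ≤ r := abs_le.2 ⟨ht1, ht2⟩
      have key := Convex.norm_image_sub_le_of_norm_hasDerivWithin_le
        (f := F) (f' := fun s => p * (p-1) * ((s^2:ℝ)) ^ ((p-2)/2))
        (s := Set.Icc (x - r) (x + r)) (C := K) (x := x) (y := x + t)
        (fun s hs => by
          have hs1 : |s - x| ≤ r := abs_le.2 ⟨by linarith [hs.1], by linarith [hs.2]⟩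
          have hsne : s ≠ 0 := by
            intro h
            rw [h] at hs1
            simp only [zero_sub, abs_neg] at hs1
            linarith
          exact (hasDerivAt_F hp hsne).hasDerivWithinAt)
        (fun s hs => by
          have hs1 : |s - x| ≤ r := abs_le.2 ⟨by linarith [hs.1], by linarith [hs.2]⟩
          have hsabs : |s| ≤ (3/2) * |x| := by
            have h2 := abs_sub_abs_le_abs_sub s x
            linarith
          have e1 : ((s^2:ℝ)) ^ ((p-2)/2) = |s| ^ (p-2) := by
            rw [sq_rpow_eq]; congr 1; ring
          rw [Real.norm_eq_abs,
            abs_of_nonneg (mul_nonneg hpp1 (Real.rpow_nonneg (by positivity) _))]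
          rw [e1, hK]
          apply mul_le_mul_of_nonneg_left _ hpp1
          exact Real.rpow_le_rpow (abs_nonneg s) hsabs (by linarith))
        (convex_Icc _ _)
        (Set.mem_Icc.2 ⟨by linarith, by linarith⟩)
        (Set.mem_Icc.2 ⟨by linarith, by linarith⟩)
      calc ‖F (x+t) - F x‖ ≤ K * ‖(x+t) - x‖ := key
        _ = K * |t| := by rw [add_sub_cancel_left, Real.norm_eq_abs]
        _ ≤ K * r := mul_le_mul_of_nonneg_left habst hK0
    have hmain := Convex.norm_image_sub_le_of_norm_hasDerivWithin_le
      (f := fun t => f (x+t) - f x - F x * t) (f' := fun t => F (x+t) - F x)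
      (s := Set.Icc (-r) r) (C := K * r) (x := 0) (y := y)
      (fun t _ => by
        have h1 : HasDerivAt (fun t : ℝ => f (x + t)) (F (x+t)) t := by
          have := (hasDerivAt_f hp (x+t)).comp t ((hasDerivAt_id t).const_add x)
          rw [mul_one] at this; exact this
        have h2 := (h1.sub_const (f x)).sub ((hasDerivAt_id t).const_mul (F x))
        have h3 : HasDerivAt (fun t => f (x+t) - f x - F x * t) (F (x+t) - F x) t := by
          rw [mul_one] at h2; exact h2
        exact h3.hasDerivWithinAt)
      hFbound
      (convex_Icc _ _)
      (Set.mem_Icc.2 ⟨by linarith, by linarith⟩)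
      (Set.mem_Icc.2 ⟨neg_abs_le y, le_abs_self y⟩)
    -- translate
    have e0 : (fun t => f (x+t) - f x - F x * t) 0 = 0 := by simp
    have habs1 : ∀ t : ℝ, f t = |t|^p := by
      intro t; rw [hf]; simp only; rw [sq_rpow_eq]; congr 1; ring
    have habs2 : F x = p * (x * |x|^(p-2)) := by
      rw [hFdef]; simp only
      rw [sq_rpow_eq, show (2*((p-2)/2) : ℝ) = p - 2 by ring]
      ring
    simp only [add_zero, mul_zero, sub_self, sub_zero, Real.norm_eq_abs] at hmain
    have hm2 : f (x+y) - f x - F x * y ≤ K * r * |y| := (abs_le.1 hmain).2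
    have hKr : K * r * |y| = p * (p-1) * (3/2:ℝ)^(p-2) * (|x|^(p-2) * y^2) := by
      have hy2 : r * |y| = y^2 := by rw [hr, abs_mul_abs_self, sq]
      calc K * r * |y| = K * (r * |y|) := by ring
        _ = K * y^2 := by rw [hy2]
        _ = _ := by rw [hK, Real.mul_rpow (by norm_num) (abs_nonneg x)]; ring
    rw [habs1 (x+y), habs1 x, habs2] at hm2
    have hC : (0:ℝ) ≤ |x|^(p-2) * y^2 := by positivity
    have hyp : (0:ℝ) ≤ |y|^p := Real.rpow_nonneg (abs_nonneg y) _
    nlinarith [hm2, hKr, mul_nonneg h1' hC, mul_nonneg (mul_nonneg hp0.le h2') hC,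
      mul_nonneg h1' hyp, mul_nonneg (mul_nonneg hp0.le h2') hyp,
      mul_nonneg (mul_nonneg hpp1 h3') hyp]

lemma bernoulli_rpow {q : ℝ} (hq : 1 ≤ q) {u δ : ℝ} (hu : 0 ≤ u) (hδ : 0 ≤ δ) :
    u^q + q * u^(q-1) * δ ≤ (u+δ)^q := by
  rcases eq_or_lt_of_le hu with h | hu'
  · rcases eq_or_lt_of_le hq with h1 | h1
    · simp [← h, ← h1]
    · rw [← h, Real.zero_rpow (by linarith : q ≠ 0),
        Real.zero_rpow (by intro hc; rw [sub_eq_zero] at hc; linarith [hc.ge, hc.le] : q - 1 ≠ 0)]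
      simp only [zero_add, mul_zero, zero_mul, add_zero]
      positivity
  · have hdu : (0:ℝ) ≤ δ / u := by positivity
    have key : 1 + q * (δ/u) ≤ (1 + δ/u) ^ q :=
      one_add_mul_self_le_rpow_one_add (by linarith : (-1:ℝ) ≤ δ/u) hq
    have h2 : u ^ q * (1 + q * (δ/u)) ≤ u ^ q * ((1 + δ/u) ^ q) :=
      mul_le_mul_of_nonneg_left key (Real.rpow_nonneg hu q)
    have h3 : u ^ q * ((1 + δ/u) ^ q) = (u + δ) ^ q := by
      rw [← Real.mul_rpow hu (by linarith : (0:ℝ) ≤ 1 + δ/u)]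
      congr 1
      field_simp
    have h4 : u ^ q * (1 + q * (δ/u)) = u ^ q + q * u ^ (q-1) * δ := by
      have : u ^ (q-1) = u ^ q / u := by
        rw [Real.rpow_sub hu' q 1, Real.rpow_one]
      rw [this]
      field_simp
    linarith

lemma shift_mono_rpow {q : ℝ} (hq : 1 ≤ q) {w s s' : ℝ} (hw : 0 ≤ w) (hs : 0 ≤ s) (hss : s ≤ s') :
    s'^q - s^q ≤ (s'+w)^q - (s+w)^q := by
  -- g x = (x+w)^q - x^q is monotone on [0,∞)
  have hmono : MonotoneOn (fun x : ℝ => (x+w)^q - x^q) (Set.Ici (0:ℝ)) := by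
    apply monotoneOn_of_deriv_nonneg (convex_Ici 0)
    · apply ContinuousOn.sub
      · exact ((continuous_id.add continuous_const).continuousOn).rpow_const
          (fun x _ => Or.inr (by linarith))
      · exact continuousOn_id.rpow_const (fun x _ => Or.inr (by linarith))
    · intro x hx
      rw [interior_Ici] at hx
      have hx' : (0:ℝ) < x := hx
      have h1 : HasDerivAt (fun x : ℝ => (x+w)^q) (q * (x+w)^(q-1) * 1) x := by
        exact (Real.hasDerivAt_rpow_const (Or.inl (by positivity))).comp x
          ((hasDerivAt_id x).add_const w)
      have h2 : HasDerivAt (fun x : ℝ => x^q) (q * x^(q-1)) x :=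
        Real.hasDerivAt_rpow_const (Or.inl (ne_of_gt hx'))
      exact ((h1.sub h2).differentiableAt).differentiableWithinAt
    · intro x hx
      rw [interior_Ici] at hx
      have hx' : (0:ℝ) < x := hx
      have h1 : HasDerivAt (fun x : ℝ => (x+w)^q) (q * (x+w)^(q-1) * 1) x := by
        exact (Real.hasDerivAt_rpow_const (Or.inl (by positivity))).comp x
          ((hasDerivAt_id x).add_const w)
      have h2 : HasDerivAt (fun x : ℝ => x^q) (q * x^(q-1)) x :=
        Real.hasDerivAt_rpow_const (Or.inl (ne_of_gt hx'))
      have hd := (h1.sub h2).deriv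
      rw [show (fun x => (x + w) ^ q - x ^ q) = ((fun x => (x + w) ^ q) - fun x => x ^ q) from rfl, hd]
      have : x ^ (q-1) ≤ (x+w)^(q-1) :=
        Real.rpow_le_rpow (le_of_lt hx') (by linarith) (by linarith)
      nlinarith [this]
  have := hmono (Set.mem_Ici.2 hs) (Set.mem_Ici.2 (hs.trans hss)) hss
  simp only at this
  linarith

variable {Ω : Type*} [MeasurableSpace Ω] {P : Measure Ω}

lemma iIndepFun_of_ae_eq {ι : Type*} {β : ι → Type*} {m : ∀ i, MeasurableSpace (β i)}
    {f g : ∀ i, Ω → β i} (hf : ProbabilityTheory.iIndepFun (m := m) f P) (h : ∀ i, f i =ᵐ[P] g i) :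
    ProbabilityTheory.iIndepFun (m := m) g P := by
  rw [iIndepFun_iff_measure_inter_preimage_eq_mul] at hf ⊢
  intro S sets hsets
  have hall : ∀ᵐ ω ∂P, ∀ i ∈ S, f i ω = g i ω :=
    (Filter.eventually_all_finset S).2 fun i _ => h i
  have h1 : (⋂ i ∈ S, g i ⁻¹' sets i) =ᵐ[P] (⋂ i ∈ S, f i ⁻¹' sets i) := by
    filter_upwards [hall] with ω hω
    have : (ω ∈ ⋂ i ∈ S, g i ⁻¹' sets i) ↔ (ω ∈ ⋂ i ∈ S, f i ⁻¹' sets i) := by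
      simp only [Set.mem_iInter, Set.mem_preimage]
      exact forall_congr' fun i => forall_congr' fun hi => by rw [hω i hi]
    exact eq_iff_iff.2 this
  rw [measure_congr h1, hf S hsets]
  refine Finset.prod_congr rfl fun i hi => ?_
  refine measure_congr ?_
  filter_upwards [h i] with ω hω
  have : (ω ∈ f i ⁻¹' sets i) ↔ (ω ∈ g i ⁻¹' sets i) := by
    simp only [Set.mem_preimage]; rw [hω]
  exact eq_iff_iff.2 this

lemma lyapunov [IsProbabilityMeasure P] {S : Ω → ℝ} {q r : ℝ}
    (hq0 : 0 ≤ q) (hqr : q ≤ r) (hr : 0 < r) (hS : MemLp S (ENNReal.ofReal r) P) :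
    ∫ ω, |S ω| ^ q ∂P ≤ (∫ ω, |S ω| ^ r ∂P) ^ (q / r) := by
  rcases eq_or_lt_of_le hq0 with h | hq
  · simp [← h, Real.rpow_zero, zero_div]
  · have hSq : MemLp S (ENNReal.ofReal q) P :=
      hS.mono_exponent (ENNReal.ofReal_le_ofReal hqr)
    have hq0' : ENNReal.ofReal q ≠ 0 := by simp only [ne_eq, ENNReal.ofReal_eq_zero, not_le]; exact hq
    have hr0' : ENNReal.ofReal r ≠ 0 := by simp only [ne_eq, ENNReal.ofReal_eq_zero, not_le]; exact hr
    have e1 := hSq.eLpNorm_eq_integral_rpow_norm hq0' ENNReal.ofReal_ne_top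
    have e2 := hS.eLpNorm_eq_integral_rpow_norm hr0' ENNReal.ofReal_ne_top
    have mono := eLpNorm_le_eLpNorm_of_exponent_le (ENNReal.ofReal_le_ofReal hqr) hS.1 (μ := P)
    rw [e1, e2, ENNReal.toReal_ofReal hq0, ENNReal.toReal_ofReal (by linarith : (0:ℝ) ≤ r)] at mono
    simp only [Real.norm_eq_abs] at mono
    have hIq : (0:ℝ) ≤ ∫ ω, |S ω| ^ q ∂P :=
      integral_nonneg fun ω => Real.rpow_nonneg (abs_nonneg _) _
    have hIr : (0:ℝ) ≤ ∫ ω, |S ω| ^ r ∂P :=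
      integral_nonneg fun ω => Real.rpow_nonneg (abs_nonneg _) _
    have mono' : (∫ ω, |S ω| ^ q ∂P) ^ q⁻¹ ≤ (∫ ω, |S ω| ^ r ∂P) ^ r⁻¹ :=
      (ENNReal.ofReal_le_ofReal_iff (Real.rpow_nonneg hIr _)).1 mono
    have step := Real.rpow_le_rpow (Real.rpow_nonneg hIq _) mono' (le_of_lt hq)
    rwa [← Real.rpow_mul hIq, ← Real.rpow_mul hIr, inv_mul_cancel₀ (ne_of_gt hq), Real.rpow_one,
      show (r⁻¹ * q : ℝ) = q / r by ring] at step

lemma continuous_abs_rpow' {q : ℝ} (hq : 0 ≤ q) : Continuous fun t : ℝ => |t| ^ q := by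
  apply continuous_iff_continuousAt.2
  intro x
  exact (Real.continuousAt_rpow_const _ _ (Or.inr hq)).comp continuous_abs.continuousAt

lemma step_ineq {p : ℝ} (hp : 2 ≤ p) [IsProbabilityMeasure P] {S ξ : Ω → ℝ}
    (hS : MemLp S (ENNReal.ofReal p) P) (hξ : MemLp ξ (ENNReal.ofReal p) P)
    (hind : IndepFun S ξ P) (hmean : ∫ ω, ξ ω ∂P = 0) :
    ∫ ω, |S ω + ξ ω| ^ p ∂P ≤ ∫ ω, |S ω| ^ p ∂P
      + (3^p + p * 2^(p-1) + p * (p-1) * (3/2:ℝ)^(p-2)) *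
        ((∫ ω, |S ω| ^ (p-2) ∂P) * (∫ ω, ξ ω ^ 2 ∂P) + ∫ ω, |ξ ω| ^ p ∂P) := by
  have hp0 : (0:ℝ) < p := by linarith
  set C := (3^p + p * 2^(p-1) + p * (p-1) * (3/2:ℝ)^(p-2)) with hC
  have hpe : (ENNReal.ofReal p) ≠ 0 := by
    simp only [ne_eq, ENNReal.ofReal_eq_zero, not_le]; exact hp0
  have hpt : (ENNReal.ofReal p) ≠ ⊤ := ENNReal.ofReal_ne_top
  have hp1e : (1:ℝ≥0∞) ≤ ENNReal.ofReal p := by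
    rw [← ENNReal.ofReal_one]; exact ENNReal.ofReal_le_ofReal (by linarith)
  -- integrability of |S|^p, |ξ|^p
  have iSp : Integrable (fun ω => |S ω| ^ p) P := by
    simpa [Real.norm_eq_abs, ENNReal.toReal_ofReal hp0.le] using
      hS.integrable_norm_rpow hpe hpt
  have iξp : Integrable (fun ω => |ξ ω| ^ p) P := by
    simpa [Real.norm_eq_abs, ENNReal.toReal_ofReal hp0.le] using
      hξ.integrable_norm_rpow hpe hpt
  -- integrability of |S+ξ|^p
  have iSum : Integrable (fun ω => |S ω + ξ ω| ^ p) P := by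
    simpa [Real.norm_eq_abs, ENNReal.toReal_ofReal hp0.le] using
      (hS.add hξ).integrable_norm_rpow hpe hpt
  -- integrability of |S|^(p-2)
  have iSq : Integrable (fun ω => |S ω| ^ (p-2)) P := by
    apply Integrable.mono (g := fun ω => 1 + |S ω| ^ p)
      ((integrable_const (1:ℝ)).add iSp)
      ((continuous_abs_rpow' (by linarith : (0:ℝ) ≤ p - 2)).comp_aestronglyMeasurable hS.1)
    filter_upwards with ω
    rw [Real.norm_eq_abs, Real.norm_eq_abs,
      abs_of_nonneg (Real.rpow_nonneg (abs_nonneg _) _),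
      abs_of_nonneg (by positivity : (0:ℝ) ≤ 1 + |S ω| ^ p)]
    rcases le_or_gt (|S ω|) 1 with h | h
    · have := Real.rpow_le_one (abs_nonneg _) h (by linarith : (0:ℝ) ≤ p - 2)
      have h2 : (0:ℝ) ≤ |S ω| ^ p := Real.rpow_nonneg (abs_nonneg _) _
      linarith
    · have := Real.rpow_le_rpow_of_exponent_le h.le (by linarith : p - 2 ≤ p)
      linarith
  -- integrability of ξ^2
  have h2p : (2:ℝ≥0∞) ≤ ENNReal.ofReal p := by
    rw [show (2:ℝ≥0∞) = ENNReal.ofReal 2 by norm_num]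
    exact ENNReal.ofReal_le_ofReal hp
  have iξ2 : Integrable (fun ω => ξ ω ^ 2) P := (hξ.mono_exponent h2p).integrable_sq
  have iξ1 : Integrable ξ P := hξ.integrable hp1e
  -- integrability of S * |S|^(p-2)
  have igS : Integrable (fun ω => S ω * |S ω| ^ (p-2)) P := by
    have hSp1 : MemLp S (ENNReal.ofReal (p-1)) P :=
      hS.mono_exponent (ENNReal.ofReal_le_ofReal (by linarith))
    have iSp1 : Integrable (fun ω => |S ω| ^ (p-1)) P := by
      simpa [Real.norm_eq_abs, ENNReal.toReal_ofReal (by linarith : (0:ℝ) ≤ p - 1)] using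
        hSp1.integrable_norm_rpow
          (by simp only [ne_eq, ENNReal.ofReal_eq_zero, not_le]; linarith) ENNReal.ofReal_ne_top
    apply Integrable.mono iSp1
      ((continuous_id.mul (continuous_abs_rpow' (by linarith : (0:ℝ) ≤ p - 2))).comp_aestronglyMeasurable hS.1)
    filter_upwards with ω
    simp only [Pi.mul_apply, id_eq]
    rw [Real.norm_eq_abs, Real.norm_eq_abs, abs_mul,
      abs_of_nonneg (Real.rpow_nonneg (abs_nonneg _) _),
      abs_of_nonneg (Real.rpow_nonneg (abs_nonneg _) _)]
    rw [show (p-1 : ℝ) = 1 + (p-2) by ring,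
      Real.rpow_add' (abs_nonneg _) (by norm_num; linarith), Real.rpow_one]
  -- independence compositions
  have hgmeas : Measurable fun t : ℝ => t * |t| ^ (p-2) :=
    (continuous_id.mul (continuous_abs_rpow' (by linarith))).measurable
  have habsmeas : Measurable fun t : ℝ => |t| ^ (p-2) :=
    (continuous_abs_rpow' (by linarith : (0:ℝ) ≤ p - 2)).measurable
  have hind1 : IndepFun (fun ω => S ω * |S ω| ^ (p-2)) ξ P := by
    have := hind.comp hgmeas measurable_id
    exact this
  have hind2 : IndepFun (fun ω => |S ω| ^ (p-2)) (fun ω => ξ ω ^ 2) P := by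
    have := hind.comp habsmeas (measurable_id.pow_const 2)
    exact this
  -- products integrable
  have iprod1 : Integrable (fun ω => (S ω * |S ω| ^ (p-2)) * ξ ω) P := by
    have := hind1.integrable_mul igS iξ1
    exact this
  have iprod2 : Integrable (fun ω => |S ω| ^ (p-2) * ξ ω ^ 2) P := by
    have := hind2.integrable_mul iSq iξ2
    exact this
  -- product integrals factor
  have e_zero : ∫ ω, (S ω * |S ω| ^ (p-2)) * ξ ω ∂P = 0 := by
    have h := hind1.integral_mul_eq_mul_integral igS.1 iξ1.1
    rw [show (∫ ω, (S ω * |S ω| ^ (p-2)) * ξ ω ∂P)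
      = integral P ((fun ω => S ω * |S ω| ^ (p-2)) * ξ) from rfl, h, hmean, mul_zero]
  have e_fact : ∫ ω, |S ω| ^ (p-2) * ξ ω ^ 2 ∂P
      = (∫ ω, |S ω| ^ (p-2) ∂P) * ∫ ω, ξ ω ^ 2 ∂P := by
    have h := hind2.integral_mul_eq_mul_integral iSq.1 iξ2.1
    rw [show (∫ ω, |S ω| ^ (p-2) * ξ ω ^ 2 ∂P)
      = integral P ((fun ω => |S ω| ^ (p-2)) * (fun ω => ξ ω ^ 2)) from rfl, h]
  -- pointwise bound and integration
  have h_pt : ∀ ω, |S ω + ξ ω| ^ p ≤ |S ω| ^ p + (p * (S ω * |S ω| ^ (p-2))) * ξ ω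
      + C * (|S ω| ^ (p-2) * ξ ω ^ 2 + |ξ ω| ^ p) := fun ω => pointwise_key hp _ _
  have imid : Integrable (fun ω => (p * (S ω * |S ω| ^ (p-2))) * ξ ω) P := by
    have := iprod1.const_mul p
    apply this.congr
    filter_upwards with ω
    ring
  have ilast : Integrable (fun ω => C * (|S ω| ^ (p-2) * ξ ω ^ 2 + |ξ ω| ^ p)) P :=
    (iprod2.add iξp).const_mul C
  have iRHS : Integrable (fun ω => |S ω| ^ p + (p * (S ω * |S ω| ^ (p-2))) * ξ ω
      + C * (|S ω| ^ (p-2) * ξ ω ^ 2 + |ξ ω| ^ p)) P := (iSp.add imid).add ilast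
  have hmono := integral_mono iSum iRHS h_pt
  have split1 : ∫ ω, (|S ω| ^ p + (p * (S ω * |S ω| ^ (p-2))) * ξ ω
        + C * (|S ω| ^ (p-2) * ξ ω ^ 2 + |ξ ω| ^ p)) ∂P
      = (∫ ω, |S ω| ^ p ∂P) + (∫ ω, (p * (S ω * |S ω| ^ (p-2))) * ξ ω ∂P)
        + ∫ ω, C * (|S ω| ^ (p-2) * ξ ω ^ 2 + |ξ ω| ^ p) ∂P := by
    have iAB : Integrable (fun ω => |S ω| ^ p + (p * (S ω * |S ω| ^ (p-2))) * ξ ω) P :=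
      iSp.add imid
    rw [integral_add iAB ilast, integral_add iSp imid]
  have emid : ∫ ω, (p * (S ω * |S ω| ^ (p-2))) * ξ ω ∂P = 0 := by
    have : ∀ ω, (p * (S ω * |S ω| ^ (p-2))) * ξ ω = p * ((S ω * |S ω| ^ (p-2)) * ξ ω) := by
      intro ω; ring
    simp_rw [this]
    rw [integral_const_mul, e_zero, mul_zero]
  have elast : ∫ ω, C * (|S ω| ^ (p-2) * ξ ω ^ 2 + |ξ ω| ^ p) ∂P
      = C * ((∫ ω, |S ω| ^ (p-2) ∂P) * (∫ ω, ξ ω ^ 2 ∂P) + ∫ ω, |ξ ω| ^ p ∂P) := by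
    rw [integral_const_mul, integral_add iprod2 iξp, e_fact]
  rw [split1, emid, elast] at hmono
  linarith

lemma rosenthal_finset {p : ℝ} (hp : 2 ≤ p) [IsProbabilityMeasure P] {n : ℕ}
    {ξ : Fin n → Ω → ℝ} (hind : ProbabilityTheory.iIndepFun ξ P)
    (hmeas : ∀ k, Measurable (ξ k)) (hmem : ∀ k, MemLp (ξ k) (ENNReal.ofReal p) P)
    (hmean : ∀ k, ∫ ω, ξ k ω ∂P = 0) (s : Finset (Fin n)) :
    ∫ ω, |∑ k ∈ s, ξ k ω| ^ p ∂P ≤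
      ((3^p + p * 2^(p-1) + p * (p-1) * (3/2:ℝ)^(p-2))^(2/p)
          * (∑ k ∈ s, ∫ ω, |ξ k ω| ^ p ∂P)^(2/p)
        + (2*(3^p + p * 2^(p-1) + p * (p-1) * (3/2:ℝ)^(p-2))/p)
          * ∑ k ∈ s, ∫ ω, ξ k ω ^ 2 ∂P) ^ (p/2) := by
  have hp0 : (0:ℝ) < p := by linarith
  set C := (3^p + p * 2^(p-1) + p * (p-1) * (3/2:ℝ)^(p-2)) with hCdef
  have hC0 : (0:ℝ) ≤ C := by
    have h1' : (0:ℝ) ≤ (3:ℝ)^p := Real.rpow_nonneg (by norm_num) _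
    have h2' : (0:ℝ) ≤ (2:ℝ)^(p-1) := Real.rpow_nonneg (by norm_num) _
    have h3' : (0:ℝ) ≤ (3/2:ℝ)^(p-2) := Real.rpow_nonneg (by norm_num) _
    have hpp1 : (0:ℝ) ≤ p * (p-1) := by nlinarith
    have := mul_nonneg hpp1 h3'
    have := mul_nonneg hp0.le h2'
    rw [hCdef]; linarith
  set c₁ := C^(2/p) with hc1def
  set c₂ := 2*C/p with hc2def
  have hc10 : (0:ℝ) ≤ c₁ := Real.rpow_nonneg hC0 _
  have hc20 : (0:ℝ) ≤ c₂ := by positivity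
  have ha : ∀ k, (0:ℝ) ≤ ∫ ω, |ξ k ω| ^ p ∂P :=
    fun k => integral_nonneg fun ω => Real.rpow_nonneg (abs_nonneg _) _
  have hb : ∀ k, (0:ℝ) ≤ ∫ ω, ξ k ω ^ 2 ∂P :=
    fun k => integral_nonneg fun ω => sq_nonneg _
  induction s using Finset.induction_on with
  | empty =>
    simp only [Finset.sum_empty, abs_zero]
    rw [Real.zero_rpow (ne_of_gt hp0), Real.zero_rpow (by positivity : (2/p : ℝ) ≠ 0)]
    simp only [integral_zero, mul_zero, add_zero]
    rw [Real.zero_rpow (by positivity : (p/2 : ℝ) ≠ 0)]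
  | insert j s hj ih =>
    set S : Ω → ℝ := fun ω => ∑ k ∈ s, ξ k ω with hSdef
    have hSmem : MemLp S (ENNReal.ofReal p) P := memLp_finset_sum s fun k _ => hmem k
    have hindS : IndepFun S (ξ j) P := by
      have := hind.indepFun_finsetSum_of_notMem hmeas hj
      have he : (∑ k ∈ s, ξ k) = S := by
        funext ω; rw [hSdef, Finset.sum_apply]
      rwa [he] at this
    have hstep := step_ineq hp hSmem (hmem j) hindS (hmean j)
    -- abbreviations
    set A := ∑ k ∈ s, ∫ ω, |ξ k ω| ^ p ∂P with hAdef
    set B := ∑ k ∈ s, ∫ ω, ξ k ω ^ 2 ∂P with hBdef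
    set a := ∫ ω, |ξ j ω| ^ p ∂P with hadef
    set b := ∫ ω, ξ j ω ^ 2 ∂P with hbdef
    have hA0 : (0:ℝ) ≤ A := Finset.sum_nonneg fun k _ => ha k
    have hB0 : (0:ℝ) ≤ B := Finset.sum_nonneg fun k _ => hb k
    have ha0 : (0:ℝ) ≤ a := ha j
    have hb0 : (0:ℝ) ≤ b := hb j
    set U := c₁ * A^(2/p) + c₂ * B with hUdef
    have hU0 : (0:ℝ) ≤ U := by positivity
    set X := ∫ ω, |S ω| ^ p ∂P with hXdef
    have hX0 : (0:ℝ) ≤ X := integral_nonneg fun ω => Real.rpow_nonneg (abs_nonneg _) _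
    have IH : X ≤ U^(p/2) := ih
    -- sum rewriting in goal
    have hsum : ∀ ω, ∑ k ∈ insert j s, ξ k ω = S ω + ξ j ω := by
      intro ω; rw [Finset.sum_insert hj, hSdef]; ring
    have hgoal_eq : ∫ ω, |∑ k ∈ insert j s, ξ k ω| ^ p ∂P = ∫ ω, |S ω + ξ j ω| ^ p ∂P := by
      congr 1; funext ω; rw [hsum ω]
    rw [hgoal_eq, Finset.sum_insert hj, Finset.sum_insert hj]
    -- Lyapunov bound
    have hlyap : ∫ ω, |S ω| ^ (p-2) ∂P ≤ X^((p-2)/p) :=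
      lyapunov (by linarith) (by linarith) hp0 hSmem
    have hXU : X^((p-2)/p) ≤ U^((p-2)/2) := by
      have hpne : p ≠ 0 := ne_of_gt hp0
      have h1 : X^((p-2)/p) ≤ (U^(p/2))^((p-2)/p) :=
        Real.rpow_le_rpow hX0 IH (by apply div_nonneg <;> linarith)
      have h2 : (U^(p/2))^((p-2)/p) = U^((p-2)/2) := by
        rw [← Real.rpow_mul hU0]
        congr 1
        field_simp
      linarith [h1, h2.le, h2.ge]
    have hmid : ∫ ω, |S ω + ξ j ω| ^ p ∂P ≤ X + C * (U^((p-2)/2) * b + a) := by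
      have hmul : C * ((∫ ω, |S ω| ^ (p-2) ∂P) * b + a) ≤ C * (U^((p-2)/2) * b + a) := by
        apply mul_le_mul_of_nonneg_left _ hC0
        have := mul_le_mul_of_nonneg_right (hlyap.trans hXU) hb0
        linarith
      calc ∫ ω, |S ω + ξ j ω| ^ p ∂P
          ≤ X + C * ((∫ ω, |S ω| ^ (p-2) ∂P) * b + a) := hstep
        _ ≤ X + C * (U^((p-2)/2) * b + a) := by linarith
    -- Bernoulli: U^(p/2) + C*U^((p-2)/2)*b ≤ (U + c₂*b)^(p/2)
    have hbern : U^(p/2) + C * U^((p-2)/2) * b ≤ (U + c₂*b)^(p/2) := by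
      have := bernoulli_rpow (q := p/2) (by linarith) hU0 (mul_nonneg hc20 hb0)
      have he : (p/2) * U^(p/2-1) * (c₂*b) = C * U^((p-2)/2) * b := by
        rw [show (p/2-1 : ℝ) = (p-2)/2 by ring, hc2def]
        field_simp
      linarith [this, he.le, he.ge]
    -- shift monotonicity: gain C*a
    have hshift : (U + c₂*b)^(p/2) + C * a
        ≤ (c₁ * (a + A)^(2/p) + c₂ * (b + B)) ^ (p/2) := by
      have hs1 : c₁ * A^(2/p) ≤ c₁ * (a + A)^(2/p) :=
        mul_le_mul_of_nonneg_left
          (Real.rpow_le_rpow hA0 (by linarith) (by positivity)) hc10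
      have hkey := shift_mono_rpow (q := p/2) (by linarith)
        (w := c₂ * B + c₂ * b) (s := c₁ * A^(2/p)) (s' := c₁ * (a + A)^(2/p))
        (by positivity) (by positivity) hs1
      have hrw1 : (c₁ * A^(2/p))^(p/2) = C * A := by
        rw [Real.mul_rpow hc10 (Real.rpow_nonneg hA0 _), hc1def,
          ← Real.rpow_mul hC0, ← Real.rpow_mul hA0,
          show (2/p * (p/2) : ℝ) = 1 by field_simp, Real.rpow_one, Real.rpow_one]
      have hrw2 : (c₁ * (a + A)^(2/p))^(p/2) = C * (a + A) := by
        rw [Real.mul_rpow hc10 (Real.rpow_nonneg (by linarith) _), hc1def,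
          ← Real.rpow_mul hC0, ← Real.rpow_mul (by linarith : (0:ℝ) ≤ a + A),
          show (2/p * (p/2) : ℝ) = 1 by field_simp, Real.rpow_one, Real.rpow_one]
      have he1 : c₁ * A^(2/p) + (c₂ * B + c₂ * b) = U + c₂*b := by rw [hUdef]; ring
      have he2 : c₁ * (a + A)^(2/p) + (c₂ * B + c₂ * b) = c₁ * (a + A)^(2/p) + c₂ * (b + B) := by
        ring
      rw [he1, he2, hrw1, hrw2] at hkey
      linarith
    calc ∫ ω, |S ω + ξ j ω| ^ p ∂P
        ≤ X + C * (U^((p-2)/2) * b + a) := hmid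
      _ ≤ U^(p/2) + C * U^((p-2)/2) * b + C * a := by linarith [IH]
      _ ≤ (U + c₂*b)^(p/2) + C * a := by linarith [hbern]
      _ ≤ (c₁ * (a + A)^(2/p) + c₂ * (b + B)) ^ (p/2) := hshift

lemma Cnn {p : ℝ} (hp : 2 ≤ p) :
    (0:ℝ) ≤ 3^p + p * 2^(p-1) + p * (p-1) * (3/2:ℝ)^(p-2) := by
  have hp0 : (0:ℝ) < p := by linarith
  have h1' : (0:ℝ) ≤ (3:ℝ)^p := Real.rpow_nonneg (by norm_num) _
  have h2' : (0:ℝ) ≤ (2:ℝ)^(p-1) := Real.rpow_nonneg (by norm_num) _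
  have h3' : (0:ℝ) ≤ (3/2:ℝ)^(p-2) := Real.rpow_nonneg (by norm_num) _
  have hpp1 : (0:ℝ) ≤ p * (p-1) := by nlinarith
  have := mul_nonneg hpp1 h3'
  have := mul_nonneg hp0.le h2'
  linarith

lemma final_bound {p C : ℝ} (hp : 2 ≤ p) (hC : 0 ≤ C) {A B : ℝ} (hA : 0 ≤ A) (hB : 0 ≤ B) :
    (C^(2/p) * A^(2/p) + (2*C/p) * B) ^ (p/2)
      ≤ 2^(p/2) * max C ((2*C/p)^(p/2)) * max A (B^(p/2)) := by
  have hp0 : (0:ℝ) < p := by linarith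
  set u := C^(2/p) * A^(2/p) with hudef
  set v := (2*C/p) * B with hvdef
  have hu0 : (0:ℝ) ≤ u := mul_nonneg (Real.rpow_nonneg hC _) (Real.rpow_nonneg hA _)
  have hv0 : (0:ℝ) ≤ v := mul_nonneg (by positivity) hB
  have hM0 : (0:ℝ) ≤ max u v := le_trans hu0 (le_max_left _ _)
  have h1 : u + v ≤ 2 * max u v := by
    have := le_max_left u v; have := le_max_right u v; linarith
  have h2 : (u+v)^(p/2) ≤ (2 * max u v)^(p/2) :=
    Real.rpow_le_rpow (by positivity) h1 (by positivity)
  have h3 : (2 * max u v)^(p/2) = 2^(p/2) * (max u v)^(p/2) :=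
    Real.mul_rpow (by norm_num) hM0
  have h4 : (max u v)^(p/2) = max (u^(p/2)) (v^(p/2)) := by
    rcases le_total u v with h | h
    · rw [max_eq_right h, max_eq_right (Real.rpow_le_rpow hu0 h (by positivity))]
    · rw [max_eq_left h, max_eq_left (Real.rpow_le_rpow hv0 h (by positivity))]
  have h5 : u^(p/2) = C * A := by
    rw [hudef, ← Real.mul_rpow hC hA, ← Real.rpow_mul (mul_nonneg hC hA),
      show (2/p * (p/2) : ℝ) = 1 by field_simp, Real.rpow_one]
  have h6 : v^(p/2) = (2*C/p)^(p/2) * B^(p/2) := Real.mul_rpow (by positivity) hB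
  have h7 : max (C * A) ((2*C/p)^(p/2) * B^(p/2))
      ≤ max C ((2*C/p)^(p/2)) * max A (B^(p/2)) := by
    apply max_le
    · exact mul_le_mul (le_max_left _ _) (le_max_left _ _) hA
        (le_trans hC (le_max_left _ _))
    · exact mul_le_mul (le_max_right _ _) (le_max_right _ _) (Real.rpow_nonneg hB _)
        (le_trans hC (le_max_left _ _))
  calc (u + v) ^ (p/2) ≤ (2 * max u v)^(p/2) := h2
    _ = 2^(p/2) * (max u v)^(p/2) := h3
    _ = 2^(p/2) * max (u^(p/2)) (v^(p/2)) := by rw [h4]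
    _ = 2^(p/2) * max (C * A) ((2*C/p)^(p/2) * B^(p/2)) := by rw [h5, h6]
    _ ≤ 2^(p/2) * (max C ((2*C/p)^(p/2)) * max A (B^(p/2))) := by
        apply mul_le_mul_of_nonneg_left h7 (Real.rpow_nonneg (by norm_num) _)
    _ = 2^(p/2) * max C ((2*C/p)^(p/2)) * max A (B^(p/2)) := by ring

/-- Rosenthal's inequality: for `p ≥ 2` there is a constant `N`, depending only on `p`,
such that for every probability space `(Ω, P)` and every finite family `ξ_1, …, ξ_n` of
independent, centered real random variables with `E|ξ_k|^p < ∞`,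
`E|ξ_1 + ⋯ + ξ_n|^p ≤ N · max(Σ_k E|ξ_k|^p, (Σ_k E ξ_k²)^{p/2})`. -/
theorem rosenthal_inequality (p : ℝ) (hp : 2 ≤ p) :
    ∃ N : ℝ, ∀ (Ω : Type u) [MeasurableSpace Ω], ∀ (P : Measure Ω) [IsProbabilityMeasure P],
      ∀ (n : ℕ) (ξ : Fin n → Ω → ℝ),
        iIndepFun ξ P →
        (∀ k, MemLp (ξ k) (ENNReal.ofReal p) P) →
        (∀ k, ∫ ω, ξ k ω ∂P = 0) →
        ∫ ω, |∑ k, ξ k ω| ^ p ∂P ≤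
          N * max (∑ k, ∫ ω, |ξ k ω| ^ p ∂P)
            ((∑ k, ∫ ω, (ξ k ω) ^ 2 ∂P) ^ (p / 2)) := by
  set C := (3^p + p * 2^(p-1) + p * (p-1) * (3/2:ℝ)^(p-2)) with hCdef
  refine ⟨2^(p/2) * max C ((2*C/p)^(p/2)), ?_⟩
  intro Ω _ P _ n ξ hind hmem hmean
  set ξ' : Fin n → Ω → ℝ := fun k => (hmem k).1.mk (ξ k) with hξ'def
  have hmeas' : ∀ k, Measurable (ξ' k) :=
    fun k => ((hmem k).1.stronglyMeasurable_mk).measurable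
  have hae : ∀ k, ξ k =ᵐ[P] ξ' k := fun k => (hmem k).1.ae_eq_mk
  have hind' : ProbabilityTheory.iIndepFun ξ' P :=
    iIndepFun_of_ae_eq hind hae
  have hmem' : ∀ k, MemLp (ξ' k) (ENNReal.ofReal p) P := fun k => (hmem k).ae_eq (hae k)
  have hmean' : ∀ k, ∫ ω, ξ' k ω ∂P = 0 := fun k => by
    rw [← integral_congr_ae (hae k)]; exact hmean k
  have key := rosenthal_finset hp hind' hmeas' hmem' hmean' Finset.univ
  have e1 : ∫ ω, |∑ k, ξ k ω| ^ p ∂P = ∫ ω, |∑ k, ξ' k ω| ^ p ∂P := by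
    apply integral_congr_ae
    have hall := (Filter.eventually_all_finset (Finset.univ : Finset (Fin n))).2
      fun k _ => hae k
    filter_upwards [hall] with ω hω
    rw [Finset.sum_congr rfl fun k hk => hω k hk]
  have e2 : (∑ k, ∫ ω, |ξ k ω| ^ p ∂P) = ∑ k, ∫ ω, |ξ' k ω| ^ p ∂P :=
    Finset.sum_congr rfl fun k _ => integral_congr_ae (by
      filter_upwards [hae k] with ω hω; rw [hω])
  have e3 : (∑ k, ∫ ω, ξ k ω ^ 2 ∂P) = ∑ k, ∫ ω, ξ' k ω ^ 2 ∂P :=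
    Finset.sum_congr rfl fun k _ => integral_congr_ae (by
      filter_upwards [hae k] with ω hω; rw [hω])
  rw [e1, e2, e3]
  have hA0 : (0:ℝ) ≤ ∑ k, ∫ ω, |ξ' k ω| ^ p ∂P :=
    Finset.sum_nonneg fun k _ => integral_nonneg fun ω => Real.rpow_nonneg (abs_nonneg _) _
  have hB0 : (0:ℝ) ≤ ∑ k, ∫ ω, ξ' k ω ^ 2 ∂P :=
    Finset.sum_nonneg fun k _ => integral_nonneg fun ω => sq_nonneg _
  exact key.trans (final_bound hp (Cnn hp) hA0 hB0)
end
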